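/- Let k be an algebraically closed field and let f, g ∈ k[x₀,x₁,x₂] be irreducible homogeneous polynomials of positive total degree. If the complements ℙ² ∖ V(f) and ℙ² ∖ V(g) are isomorphic, i.e. if the degree-zero parts A_f and A_g of the localizations of k[x₀,x₁,x₂] away from f and away from g are isomorphic as k-algebras, then the total degree of f equals the total degree of g. -/

import Mathlib

open MvPolynomial

attribute [local instance] MvPolynomial.gradedAlgebra

/-- The degree-zero part `A_f` of the localization of `k[x₀,x₁,x₂]` away from `f`,
i.e. the coordinate ring of the affine variety `ℙ² ∖ V(f)`. -/
noncomputable abbrev AwayRing (k : Type) [Field k] (f : MvPolynomial (Fin 3) k) : Type :=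
  HomogeneousLocalization.Away (homogeneousSubmodule (Fin 3) k) f

noncomputable instance (k : Type) [Field k] (f : MvPolynomial (Fin 3) k) :
    Algebra k (AwayRing k f) :=
  ((algebraMap (homogeneousSubmodule (Fin 3) k 0) (AwayRing k f)).comp
    (algebraMap k (homogeneousSubmodule (Fin 3) k 0))).toAlgebra

namespace Lemma21

noncomputable section

variable {k : Type} [Field k]

/-! ### Homogeneity of factors of homogeneous polynomials -/

/-- `p(t·x)` as a polynomial in `t`. -/
def scale {σ : Type} (p : MvPolynomial σ k) : Polynomial (MvPolynomial σ k) :=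
  MvPolynomial.aeval (fun i => Polynomial.C (MvPolynomial.X i) * Polynomial.X) p

variable {σ : Type}

lemma scale_mul (p q : MvPolynomial σ k) : scale (p * q) = scale p * scale q :=
  map_mul _ _ _

lemma scale_coeff (p : MvPolynomial σ k) (n : ℕ) :
    (scale p).coeff n = homogeneousComponent n p := by
  induction p using MvPolynomial.induction_on' with
  | add p q hp hq =>
      rw [scale, map_add, Polynomial.coeff_add, map_add]
      rw [scale] at hp hq
      rw [hp, hq]
  | monomial m c =>
      have key : scale (monomial m c)
          = Polynomial.C (monomial m c) * Polynomial.X ^ (Finsupp.degree m) := by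
        rw [scale, aeval_monomial]
        have h1 : (Finsupp.prod m fun i e =>
              (Polynomial.C (MvPolynomial.X i) * Polynomial.X
                : Polynomial (MvPolynomial σ k)) ^ e)
            = Polynomial.C (Finsupp.prod m fun i e => (MvPolynomial.X i) ^ e)
                * Polynomial.X ^ (Finsupp.degree m) := by
          rw [Finsupp.prod, Finsupp.prod, Finsupp.degree]
          calc (∏ a ∈ m.support,
                ((Polynomial.C (MvPolynomial.X a) * Polynomial.X
                  : Polynomial (MvPolynomial σ k)) ^ m a))
              = ∏ a ∈ m.support, (Polynomial.C ((MvPolynomial.X a : MvPolynomial σ k) ^ m a)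
                  * Polynomial.X ^ m a) := by
                refine Finset.prod_congr rfl fun i _ => ?_
                rw [mul_pow, map_pow]
            _ = (∏ a ∈ m.support, Polynomial.C ((MvPolynomial.X a : MvPolynomial σ k) ^ m a))
                  * ∏ a ∈ m.support, (Polynomial.X : Polynomial (MvPolynomial σ k)) ^ m a :=
                Finset.prod_mul_distrib
            _ = Polynomial.C (∏ a ∈ m.support, (MvPolynomial.X a : MvPolynomial σ k) ^ m a)
                  * Polynomial.X ^ (∑ a ∈ m.support, m a) := by
                rw [map_prod, Finset.prod_pow_eq_pow_sum]
        rw [h1, monomial_eq, map_mul]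
        have : (algebraMap k (Polynomial (MvPolynomial σ k))) c = Polynomial.C (C c) := rfl
        rw [this, mul_assoc]
      rw [key]
      have hmem : (monomial m c) ∈ homogeneousSubmodule σ k (Finsupp.degree m) :=
        (mem_homogeneousSubmodule _ _).2 (isHomogeneous_monomial c rfl)
      rw [homogeneousComponent_of_mem hmem]
      rw [Polynomial.coeff_C_mul, Polynomial.coeff_X_pow]
      rcases eq_or_ne n (Finsupp.degree m) with h | h
      · rw [if_pos h, if_pos h, mul_one]
      · rw [if_neg h, if_neg h, mul_zero]

lemma scale_eq_of_isHomogeneous {p : MvPolynomial σ k} {n : ℕ} (hp : p.IsHomogeneous n) :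
    scale p = Polynomial.C p * Polynomial.X ^ n := by
  apply Polynomial.ext; intro i
  rw [scale_coeff, homogeneousComponent_of_mem ((mem_homogeneousSubmodule _ _).2 hp),
    Polynomial.coeff_C_mul, Polynomial.coeff_X_pow]
  rcases eq_or_ne i n with h | h
  · rw [if_pos h, if_pos h, mul_one]
  · rw [if_neg h, if_neg h, mul_zero]

lemma isHomogeneous_of_scale_eq {p a : MvPolynomial σ k} {i : ℕ}
    (h : scale p = Polynomial.C a * Polynomial.X ^ i) : p.IsHomogeneous i := by
  have hcomp : ∀ j, j ≠ i → homogeneousComponent j p = 0 := by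
    intro j hj
    rw [← scale_coeff, h, Polynomial.coeff_C_mul, Polynomial.coeff_X_pow, if_neg hj, mul_zero]
  have hp : p = homogeneousComponent i p := by
    conv_lhs => rw [← sum_homogeneousComponent p]
    rw [Finset.sum_eq_single i (fun b _ hb => hcomp b hb)
      (fun hi => homogeneousComponent_eq_zero _ p (by simpa using hi))]
  rw [hp]
  exact homogeneousComponent_isHomogeneous i p

lemma scale_ne_zero {p : MvPolynomial σ k} (hp : p ≠ 0) : scale p ≠ 0 := by
  intro h
  apply hp
  conv_lhs => rw [← sum_homogeneousComponent p]
  refine Finset.sum_eq_zero fun i _ => ?_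
  rw [← scale_coeff, h, Polynomial.coeff_zero]

/-- Key structural fact: factors of a (nonzero) homogeneous polynomial are homogeneous. -/
lemma exists_isHomogeneous_of_mul {p q : MvPolynomial σ k} {n : ℕ} (hp : p ≠ 0) (hq : q ≠ 0)
    (h : (p * q).IsHomogeneous n) :
    ∃ a b : ℕ, a + b = n ∧ p.IsHomogeneous a ∧ q.IsHomogeneous b := by
  classical
  have hpq : p * q ≠ 0 := mul_ne_zero hp hq
  have hs : scale p * scale q = Polynomial.C (p * q) * Polynomial.X ^ n := by
    rw [← scale_mul, scale_eq_of_isHomogeneous h]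
  have hP : scale p ≠ 0 := scale_ne_zero hp
  have hQ : scale q ≠ 0 := scale_ne_zero hq
  have hsm : scale p * scale q = Polynomial.monomial n (p * q) := by
    rw [hs, Polynomial.C_mul_X_pow_eq_monomial]
  have hnd : (scale p).natDegree + (scale q).natDegree = n := by
    rw [← Polynomial.natDegree_mul hP hQ, hsm, Polynomial.natDegree_monomial, if_neg hpq]
  have hnt : (scale p).natTrailingDegree + (scale q).natTrailingDegree = n := by
    rw [← Polynomial.natTrailingDegree_mul hP hQ, hsm, Polynomial.natTrailingDegree_monomial hpq]
  have h1 := Polynomial.natTrailingDegree_le_natDegree (scale p)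
  have h2 := Polynomial.natTrailingDegree_le_natDegree (scale q)
  have hPeq : (scale p).natTrailingDegree = (scale p).natDegree := by omega
  have hQeq : (scale q).natTrailingDegree = (scale q).natDegree := by omega
  have hmono : ∀ r : MvPolynomial σ k, r ≠ 0 →
      (scale r).natTrailingDegree = (scale r).natDegree →
      scale r = Polynomial.C ((scale r).coeff (scale r).natDegree)
        * Polynomial.X ^ (scale r).natDegree := by
    intro r hr hre
    ext j
    rw [Polynomial.coeff_C_mul, Polynomial.coeff_X_pow]
    rcases lt_trichotomy j (scale r).natDegree with hj | hj | hj
    · rw [Polynomial.coeff_eq_zero_of_lt_natTrailingDegree (hre ▸ hj), if_neg hj.ne, mul_zero]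
    · rw [hj, if_pos rfl, mul_one]
    · rw [Polynomial.coeff_eq_zero_of_natDegree_lt hj, if_neg hj.ne', mul_zero]
  refine ⟨(scale p).natDegree, (scale q).natDegree, hnd,
    isHomogeneous_of_scale_eq (hmono p hp hPeq), isHomogeneous_of_scale_eq (hmono q hq hQeq)⟩

lemma isHomogeneous_zero_of_isUnit {p : MvPolynomial σ k} (h : IsUnit p) :
    p.IsHomogeneous 0 := by
  obtain ⟨q, hq⟩ := h.exists_right_inv
  have hp : p ≠ 0 := by rintro rfl; rw [zero_mul] at hq; exact one_ne_zero hq.symm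
  have hq0 : q ≠ 0 := by rintro rfl; rw [mul_zero] at hq; exact one_ne_zero hq.symm
  obtain ⟨a, b, hab, ha, -⟩ := exists_isHomogeneous_of_mul hp hq0
    (by rw [hq]; exact isHomogeneous_one σ k)
  obtain rfl : a = 0 := by omega
  exact ha

lemma exists_C_of_isHomogeneous_zero {p : MvPolynomial σ k} (hp : p.IsHomogeneous 0) :
    ∃ c : k, p = C c := by
  refine ⟨coeff 0 p, ?_⟩
  have h1 : homogeneousComponent 0 p = p := by
    rw [homogeneousComponent_of_mem ((mem_homogeneousSubmodule _ _).2 hp), if_pos rfl]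
  conv_lhs => rw [← h1, homogeneousComponent_zero]

lemma isUnit_of_isHomogeneous_zero {p : MvPolynomial σ k} (hp : p.IsHomogeneous 0)
    (h0 : p ≠ 0) : IsUnit p := by
  obtain ⟨c, rfl⟩ := exists_C_of_isHomogeneous_zero hp
  have : c ≠ 0 := fun h => h0 (by rw [h, map_zero])
  exact this.isUnit.map (C : k →+* MvPolynomial σ k)

lemma prime_X (i : σ) : Prime (X i : MvPolynomial σ k) := by
  rw [← UniqueFactorizationMonoid.irreducible_iff_prime]
  constructor
  · intro h
    have h0 := (isHomogeneous_X k i).inj_right (isHomogeneous_zero_of_isUnit h)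
      (X_ne_zero (R := k) i)
    exact one_ne_zero h0
  · intro a b hab
    have ha : a ≠ 0 := by
      rintro rfl; rw [zero_mul] at hab; exact X_ne_zero (R := k) i hab
    have hb : b ≠ 0 := by
      rintro rfl; rw [mul_zero] at hab; exact X_ne_zero (R := k) i hab
    obtain ⟨α, β, hsum, hA, hB⟩ := exists_isHomogeneous_of_mul ha hb
      (by rw [← hab]; exact isHomogeneous_X k i)
    rcases Nat.eq_zero_or_pos α with h | h
    · exact Or.inl (isUnit_of_isHomogeneous_zero (h ▸ hA) ha)
    · have : β = 0 := by omega
      exact Or.inr (isUnit_of_isHomogeneous_zero (this ▸ hB) hb)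

lemma X0_not_dvd_X1 : ¬ (X 1 : MvPolynomial (Fin 3) k) ∣ X 0 := by
  intro ⟨c, hc⟩
  have := congrArg (eval (fun j : Fin 3 => if j = 0 then (1 : k) else 0)) hc
  simp at this

/-! ### The degree-zero localization away from `f` -/

variable (f : MvPolynomial (Fin 3) k) {d : ℕ}

/-- Build an element `a / f^m` of `AwayRing k f`. -/
def elt (hf : f.IsHomogeneous d) (a : MvPolynomial (Fin 3) k) (m : ℕ)
    (ha : a.IsHomogeneous (m * d)) : AwayRing k f :=
  HomogeneousLocalization.mk
    { deg := m * d
      num := ⟨a, (mem_homogeneousSubmodule _ _).2 ha⟩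
      den := ⟨f ^ m, (mem_homogeneousSubmodule _ _).2 (by
        have := hf.pow m; rwa [mul_comm] at this)⟩
      den_mem := show f ^ m ∈ Submonoid.powers f from ⟨m, rfl⟩ }

variable {f}

section elt

variable (hf : f.IsHomogeneous d) (hf0 : f ≠ 0)

lemma val_elt (a : MvPolynomial (Fin 3) k) (m : ℕ) (ha : a.IsHomogeneous (m * d)) :
    (elt f hf a m ha).val = Localization.mk a ⟨f ^ m, Submonoid.pow_mem _ (Submonoid.mem_powers f) m⟩ :=
  HomogeneousLocalization.val_mk _

include hf0 in
lemma elt_eq_iff {a b : MvPolynomial (Fin 3) k} {m n : ℕ}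
    (ha : a.IsHomogeneous (m * d)) (hb : b.IsHomogeneous (n * d)) :
    elt f hf a m ha = elt f hf b n hb ↔ a * f ^ n = b * f ^ m := by
  constructor
  · intro h
    have h2 := congrArg HomogeneousLocalization.val h
    rw [val_elt, val_elt, Localization.mk_eq_mk_iff, Localization.r_iff_exists] at h2
    obtain ⟨⟨c, t, rfl⟩, hc⟩ := h2
    simp only at hc
    have hft : (f : MvPolynomial (Fin 3) k) ^ t ≠ 0 := pow_ne_zero _ hf0
    have := mul_left_cancel₀ hft hc
    rw [mul_comm (f ^ n) a, mul_comm (f ^ m) b] at this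
    exact this
  · intro h
    apply HomogeneousLocalization.val_injective
    rw [val_elt, val_elt, Localization.mk_eq_mk_iff, Localization.r_iff_exists]
    refine ⟨1, ?_⟩
    simp only [OneMemClass.coe_one, one_mul]
    rw [mul_comm ((f : MvPolynomial (Fin 3) k) ^ n) a, mul_comm ((f : MvPolynomial (Fin 3) k) ^ m) b]
    exact h

lemma elt_congr {a b : MvPolynomial (Fin 3) k} {m n : ℕ}
    (ha : a.IsHomogeneous (m * d)) (hab : a = b) (hmn : m = n) :
    elt f hf a m ha = elt f hf b n (by rw [← hab, ← hmn]; exact ha) := by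
  subst hab; subst hmn; rfl

lemma elt_mul {a b : MvPolynomial (Fin 3) k} {m n : ℕ}
    (ha : a.IsHomogeneous (m * d)) (hb : b.IsHomogeneous (n * d)) :
    elt f hf a m ha * elt f hf b n hb
      = elt f hf (a * b) (m + n) (by rw [add_mul]; exact ha.mul hb) := by
  apply HomogeneousLocalization.val_injective
  rw [HomogeneousLocalization.val_mul, val_elt, val_elt, val_elt, Localization.mk_mul]
  congr 1
  exact Subtype.ext (pow_add f m n).symm

lemma elt_pow {a : MvPolynomial (Fin 3) k} {m : ℕ} (ha : a.IsHomogeneous (m * d)) (i : ℕ) :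
    (elt f hf a m ha) ^ i
      = elt f hf (a ^ i) (m * i) (by rw [show m * i * d = (m * d) * i by ring]; exact ha.pow i) := by
  apply HomogeneousLocalization.val_injective
  rw [HomogeneousLocalization.val_pow, val_elt, val_elt, Localization.mk_pow]
  congr 1
  exact Subtype.ext (pow_mul f m i).symm

lemma elt_one : elt f hf (1 : MvPolynomial (Fin 3) k) 0 (by simpa using isHomogeneous_one (Fin 3) k) = 1 := by
  apply HomogeneousLocalization.val_injective
  rw [val_elt, HomogeneousLocalization.val_one]
  have : (⟨f ^ 0, ⟨0, rfl⟩⟩ : Submonoid.powers f) = 1 := by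
    exact Subtype.ext (pow_zero f)
  rw [this, Localization.mk_one]

lemma elt_zero : elt f hf (0 : MvPolynomial (Fin 3) k) 0 (isHomogeneous_zero _ _ _) = 0 := by
  apply HomogeneousLocalization.val_injective
  rw [val_elt, HomogeneousLocalization.val_zero, Localization.mk_zero]

include hf0 in
lemma elt_eq_zero_iff {a : MvPolynomial (Fin 3) k} {m : ℕ} (ha : a.IsHomogeneous (m * d)) :
    elt f hf a m ha = 0 ↔ a = 0 := by
  rw [← elt_zero hf, elt_eq_iff hf hf0]
  simp

include hf0 in
lemma exists_elt (u : AwayRing k f) :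
    ∃ (a : MvPolynomial (Fin 3) k) (m : ℕ) (ha : a.IsHomogeneous (m * d)),
      u = elt f hf a m ha := by
  obtain ⟨c, rfl⟩ := HomogeneousLocalization.mk_surjective u
  obtain ⟨m, hm'⟩ := c.den_mem
  have hm : f ^ m = (c.den : MvPolynomial (Fin 3) k) := hm' 
  have hden : (c.den : MvPolynomial (Fin 3) k).IsHomogeneous c.deg :=
    (mem_homogeneousSubmodule _ _).1 c.den.2
  have hfm : (f ^ m : MvPolynomial (Fin 3) k).IsHomogeneous (m * d) := by
    have := hf.pow m; rwa [mul_comm] at this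
  have hfm0 : (f : MvPolynomial (Fin 3) k) ^ m ≠ 0 := pow_ne_zero _ hf0
  have hdeg : c.deg = m * d := by
    refine (hfm.inj_right ?_ hfm0).symm
    rw [hm]; exact hden
  have hnum : (c.num : MvPolynomial (Fin 3) k).IsHomogeneous (m * d) := by
    rw [← hdeg]; exact (mem_homogeneousSubmodule _ _).1 c.num.2
  refine ⟨c.num, m, hnum, ?_⟩
  apply HomogeneousLocalization.val_injective
  rw [HomogeneousLocalization.val_mk, val_elt]
  congr 1
  exact Subtype.ext hm.symm


include hf0 in
lemma exists_reduced_aux (hd : 0 < d) :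
    ∀ (m : ℕ) (a : MvPolynomial (Fin 3) k) (ha : a.IsHomogeneous (m * d)), a ≠ 0 →
      ∃ (b : MvPolynomial (Fin 3) k) (n : ℕ) (hb : b.IsHomogeneous (n * d)),
        ¬ f ∣ b ∧ b ≠ 0 ∧ elt f hf a m ha = elt f hf b n hb := by
  intro m
  induction m with
  | zero =>
      intro a ha h0
      refine ⟨a, 0, ha, ?_, h0, rfl⟩
      rintro ⟨c, rfl⟩
      have hc : c ≠ 0 := by rintro rfl; rw [mul_zero] at h0; exact h0 rfl
      obtain ⟨α, β, hs, hfα, -⟩ := exists_isHomogeneous_of_mul hf0 hc (by simpa using ha)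
      have hα : α = d := hfα.inj_right hf hf0
      omega
  | succ m IH =>
      intro a ha h0
      by_cases hdvd : f ∣ a
      · obtain ⟨c, rfl⟩ := hdvd
        have hc : c ≠ 0 := by rintro rfl; rw [mul_zero] at h0; exact h0 rfl
        obtain ⟨α, β, hs, hfα, hcβ⟩ := exists_isHomogeneous_of_mul hf0 hc ha
        have hα : α = d := hfα.inj_right hf hf0
        have hβ : β = m * d := by
          rw [hα, Nat.succ_mul, add_comm (m * d) d] at hs
          exact Nat.add_left_cancel hs
        have hc' : c.IsHomogeneous (m * d) := hβ ▸ hcβ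
        have heq : elt f hf (f * c) (m + 1) ha = elt f hf c m hc' := by
          rw [elt_eq_iff hf hf0]
          ring
        rw [heq]
        exact IH c hc' hc
      · exact ⟨a, m + 1, ha, hdvd, h0, rfl⟩

include hf0 in
lemma exists_red (hd : 0 < d) (u : AwayRing k f) (hu : u ≠ 0) :
    ∃ (a : MvPolynomial (Fin 3) k) (m : ℕ) (ha : a.IsHomogeneous (m * d)),
      ¬ f ∣ a ∧ a ≠ 0 ∧ u = elt f hf a m ha := by
  obtain ⟨a, m, ha, rfl⟩ := exists_elt hf hf0 u
  have h0 : a ≠ 0 := by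
    intro h; apply hu; subst h; exact (elt_eq_zero_iff hf hf0 ha).2 rfl
  obtain ⟨b, n, hb, hfb, hb0, heq⟩ := exists_reduced_aux hf hf0 hd m a ha h0
  exact ⟨b, n, hb, hfb, hb0, heq⟩

include hf hf0 in
lemma one_ne_zero_away : (1 : AwayRing k f) ≠ 0 := by
  rw [← elt_one hf, Ne, elt_eq_zero_iff hf hf0]
  exact one_ne_zero

include hf0 in
lemma isUnit_elt_iff (hd : 0 < d) (hfi : Irreducible f) {a : MvPolynomial (Fin 3) k} {m : ℕ}
    (ha : a.IsHomogeneous (m * d)) (h0 : a ≠ 0) (hred : ¬ f ∣ a) :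
    IsUnit (elt f hf a m ha) ↔ m = 0 := by
  constructor
  · intro hu
    obtain ⟨v, hv⟩ := hu.exists_right_inv
    have hv0 : v ≠ 0 := by
      rintro rfl; rw [mul_zero] at hv; exact one_ne_zero_away hf hf0 hv.symm
    obtain ⟨b, n, hb, hfb, hb0, rfl⟩ := exists_red hf hf0 hd v hv0
    rw [elt_mul hf, ← elt_one hf, elt_eq_iff hf hf0] at hv
    rw [pow_zero, mul_one, one_mul] at hv
    by_contra hm
    have hfd : f ∣ a * b := by
      rw [hv]
      exact dvd_pow_self f (by omega)
    have hfp : Prime f := UniqueFactorizationMonoid.irreducible_iff_prime.mp hfi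
    rcases hfp.2.2 _ _ hfd with h | h
    · exact hred h
    · exact hfb h
  · rintro rfl
    have ha0 : a.IsHomogeneous 0 := by simpa using ha
    obtain ⟨c, rfl⟩ := exists_C_of_isHomogeneous_zero ha0
    have hc : c ≠ 0 := fun h => h0 (by rw [h, map_zero])
    refine IsUnit.of_mul_eq_one (elt f hf (C c⁻¹) 0 (by simpa using isHomogeneous_C (Fin 3) (c⁻¹))) ?_
    rw [elt_mul hf]
    have h1 : (C c : MvPolynomial (Fin 3) k) * C c⁻¹ = 1 := by
      rw [← map_mul, mul_inv_cancel₀ hc, map_one]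
    rw [elt_congr hf _ h1 (rfl : (0 + 0 : ℕ) = 0)]
    exact elt_one hf

include hf0 in
lemma elt_dvd_of_dvd (hd : 0 < d) {a b : MvPolynomial (Fin 3) k} {m n : ℕ}
    (ha : a.IsHomogeneous (m * d)) (hb : b.IsHomogeneous (n * d))
    (ha0 : a ≠ 0) (hb0 : b ≠ 0) (hdvd : a ∣ b) :
    elt f hf a m ha ∣ elt f hf b n hb := by
  obtain ⟨c, rfl⟩ := hdvd
  have hc0 : c ≠ 0 := by rintro rfl; rw [mul_zero] at hb0; exact hb0 rfl
  obtain ⟨α, β, hs, hA, hB⟩ := exists_isHomogeneous_of_mul ha0 hc0 hb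
  have hα : α = m * d := hA.inj_right ha ha0
  subst hα
  have hle : m * d ≤ n * d := Nat.le.intro hs
  have hmn : m ≤ n := Nat.le_of_mul_le_mul_right hle hd
  have hβ : β = (n - m) * d := by
    have h1 : β = n * d - m * d := by
      rw [← hs, Nat.add_sub_cancel_left]
    rw [h1, Nat.sub_mul]
  have hc : c.IsHomogeneous ((n - m) * d) := hβ ▸ hB
  refine ⟨elt f hf c (n - m) hc, ?_⟩
  rw [elt_mul hf]
  exact (elt_congr hf _ rfl (Nat.add_sub_cancel' hmn)).symm

include hf0 in
lemma dvd_of_elt_dvd (hfi : Irreducible f) {a b : MvPolynomial (Fin 3) k} {m n : ℕ}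
    (ha : a.IsHomogeneous (m * d)) (hb : b.IsHomogeneous (n * d))
    (hfa : ¬ f ∣ a)
    (h : elt f hf a m ha ∣ elt f hf b n hb) : a ∣ b := by
  obtain ⟨w, hw⟩ := h
  obtain ⟨c, r, hc, rfl⟩ := exists_elt hf hf0 w
  rw [elt_mul hf, elt_eq_iff hf hf0] at hw
  have hdvd : a ∣ b * f ^ (m + r) := ⟨c * f ^ n, by rw [hw]; ring⟩
  have hrelf : IsRelPrime a f := by
    intro z hz1 hz2
    obtain ⟨t, ht⟩ := hz2
    rcases hfi.isUnit_or_isUnit ht with h1 | h1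
    · exact h1
    · exfalso
      apply hfa
      have hzf : f ∣ z := by
        obtain ⟨tu, rfl⟩ := h1
        exact ⟨(↑tu⁻¹ : MvPolynomial (Fin 3) k), by rw [ht, mul_assoc, Units.mul_inv, mul_one]⟩
      exact hzf.trans hz1
  exact (hrelf.pow_right).dvd_of_dvd_mul_right hdvd

include hf0 in
lemma irreducible_elt (hd : 0 < d) (hfi : Irreducible f) {a : MvPolynomial (Fin 3) k} {m : ℕ}
    (ha : a.IsHomogeneous (m * d)) (hfa : ¬ f ∣ a) (h0 : a ≠ 0) (hm : m ≠ 0)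
    (hatom : ∀ (x y : MvPolynomial (Fin 3) k) (i j : ℕ), x.IsHomogeneous (i * d) →
      y.IsHomogeneous (j * d) → a = x * y → i = 0 ∨ j = 0) :
    Irreducible (elt f hf a m ha) := by
  constructor
  · rw [isUnit_elt_iff hf hf0 hd hfi ha h0 hfa]
    exact hm
  · intro v w hvw
    have helt0 : elt f hf a m ha ≠ 0 := by
      rw [Ne, elt_eq_zero_iff hf hf0]
      exact h0
    have hv0 : v ≠ 0 := by rintro rfl; rw [zero_mul] at hvw; exact helt0 hvw
    have hw0 : w ≠ 0 := by rintro rfl; rw [mul_zero] at hvw; exact helt0 hvw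
    obtain ⟨x, i, hx, hfx, hx0, rfl⟩ := exists_red hf hf0 hd v hv0
    obtain ⟨y, j, hy, hfy, hy0, rfl⟩ := exists_red hf hf0 hd w hw0
    rw [elt_mul hf, elt_eq_iff hf hf0] at hvw
    have hfxy : ¬ f ∣ x * y := by
      intro hdvd
      have hfp : Prime f := UniqueFactorizationMonoid.irreducible_iff_prime.mp hfi
      rcases hfp.2.2 _ _ hdvd with h | h
      · exact hfx h
      · exact hfy h
    have key : a = x * y := by
      rcases le_total (i + j) m with hle | hle
      · have hsplit : a = x * y * f ^ (m - (i + j)) := by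
          apply mul_right_cancel₀ (pow_ne_zero (i + j) hf0)
          rw [hvw, mul_assoc (x * y), ← pow_add, Nat.sub_add_cancel hle]
        rcases Nat.eq_zero_or_pos (m - (i + j)) with h' | h'
        · rw [h', pow_zero, mul_one] at hsplit; exact hsplit
        · exfalso
          apply hfa
          rw [hsplit]
          exact Dvd.dvd.mul_left (dvd_pow_self f h'.ne') _
      · have hsplit : x * y = a * f ^ ((i + j) - m) := by
          apply mul_right_cancel₀ (pow_ne_zero m hf0)
          rw [← hvw, mul_assoc a, ← pow_add, Nat.sub_add_cancel hle]
        rcases Nat.eq_zero_or_pos ((i + j) - m) with h' | h'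
        · rw [h', pow_zero, mul_one] at hsplit; exact hsplit.symm
        · exfalso
          apply hfxy
          rw [hsplit]
          exact Dvd.dvd.mul_left (dvd_pow_self f h'.ne') _
    rcases hatom x y i j hx hy key with h | h
    · exact Or.inl ((isUnit_elt_iff hf hf0 hd hfi hx hx0 hfx).2 h)
    · exact Or.inr ((isUnit_elt_iff hf hf0 hd hfi hy hy0 hfy).2 h)

include hf0 in
lemma atom_of_irreducible (hd : 0 < d) (hfi : Irreducible f) {a : MvPolynomial (Fin 3) k} {m : ℕ}
    (ha : a.IsHomogeneous (m * d)) (hfa : ¬ f ∣ a) (h0 : a ≠ 0)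
    (hirr : Irreducible (elt f hf a m ha)) :
    ∀ (x y : MvPolynomial (Fin 3) k) (i j : ℕ), x.IsHomogeneous (i * d) →
      y.IsHomogeneous (j * d) → a = x * y → i = 0 ∨ j = 0 := by
  intro x y i j hx hy hxy
  have hx0 : x ≠ 0 := by rintro rfl; rw [zero_mul] at hxy; exact h0 hxy
  have hy0 : y ≠ 0 := by rintro rfl; rw [mul_zero] at hxy; exact h0 hxy
  have hfx : ¬ f ∣ x := fun ⟨c, hc⟩ => hfa ⟨c * y, by rw [hxy, hc]; ring⟩
  have hfy : ¬ f ∣ y := fun ⟨c, hc⟩ => hfa ⟨x * c, by rw [hxy, hc]; ring⟩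
  have hmij : m = i + j := by
    have h1 : a.IsHomogeneous (i * d + j * d) := by
      rw [hxy]; exact hx.mul hy
    have h2 : m * d = i * d + j * d := ha.inj_right h1 h0
    rw [← add_mul] at h2
    exact Nat.eq_of_mul_eq_mul_right hd h2
  have heq : elt f hf a m ha = elt f hf x i hx * elt f hf y j hy := by
    rw [elt_mul hf]
    exact elt_congr hf _ hxy hmij
  rcases hirr.isUnit_or_isUnit heq with h | h
  · exact Or.inl ((isUnit_elt_iff hf hf0 hd hfi hx hx0 hfx).1 h)
  · exact Or.inr ((isUnit_elt_iff hf hf0 hd hfi hy hy0 hfy).1 h)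

lemma atom_multiplicity_bound (hd : 0 < d) {a : MvPolynomial (Fin 3) k} {m : ℕ}
    (ha : a.IsHomogeneous (m * d)) (h0 : a ≠ 0)
    (hatom : ∀ (x y : MvPolynomial (Fin 3) k) (i j : ℕ), x.IsHomogeneous (i * d) →
      y.IsHomogeneous (j * d) → a = x * y → i = 0 ∨ j = 0)
    {p : MvPolynomial (Fin 3) k} (hp : Prime p) {i : ℕ} (hpi : p ^ i ∣ a) : i ≤ d := by
  by_contra hgt
  push_neg at hgt
  have hp0 : p ≠ 0 := hp.ne_zero
  -- p is homogeneous of some degree δ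
  obtain ⟨c0, hc0⟩ : p ∣ a := (dvd_pow_self p (by omega : i ≠ 0)).trans hpi
  have hc00 : c0 ≠ 0 := by rintro rfl; rw [mul_zero] at hc0; exact h0 hc0
  obtain ⟨δ, β0, -, hpδ, -⟩ := exists_isHomogeneous_of_mul hp0 hc00 (hc0 ▸ ha)
  set g := Nat.gcd d δ with hgdef
  have hg0 : 0 < g := Nat.gcd_pos_of_pos_left δ hd
  set j₀ := d / g with hj₀def
  have hj₀1 : 1 ≤ j₀ := (Nat.one_le_div_iff hg0).2 (Nat.gcd_le_left δ hd)
  have hj₀d : j₀ ≤ d := Nat.div_le_self d g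
  set t := δ / g with htdef
  have hδt : j₀ * δ = t * d := by
    conv_lhs => rw [show δ = δ / g * g from (Nat.div_mul_cancel (Nat.gcd_dvd_right d δ)).symm]
    rw [show j₀ * (δ / g * g) = (d / g * g) * (δ / g) by ring,
      Nat.div_mul_cancel (Nat.gcd_dvd_left d δ), mul_comm]
  -- split a = p^j₀ * c with p ∣ c
  obtain ⟨c, hc⟩ : p ^ j₀ ∣ a := (pow_dvd_pow p (by omega : j₀ ≤ i)).trans hpi
  have hc0' : c ≠ 0 := by rintro rfl; rw [mul_zero] at hc; exact h0 hc
  have hpc : p ∣ c := by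
    obtain ⟨s, hs⟩ : p ^ (j₀ + 1) ∣ a := (pow_dvd_pow p (by omega : j₀ + 1 ≤ i)).trans hpi
    have h2 : p ^ j₀ * c = p ^ j₀ * (p * s) := by
      rw [← hc, hs, pow_succ]; ring
    exact ⟨s, mul_left_cancel₀ (pow_ne_zero j₀ hp0) h2⟩
  have hpj0 : (p ^ j₀ : MvPolynomial (Fin 3) k) ≠ 0 := pow_ne_zero _ hp0
  have hpjh : (p ^ j₀).IsHomogeneous (t * d) := by
    rw [← hδt, mul_comm j₀ δ]
    exact hpδ.pow j₀
  obtain ⟨α, β, hs, hA, hB⟩ := exists_isHomogeneous_of_mul hpj0 hc0' (hc ▸ ha)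
  have hα : α = t * d := hA.inj_right hpjh hpj0
  have htm : t ≤ m := by
    have : t * d ≤ m * d := by rw [← hα]; exact Nat.le.intro hs
    exact Nat.le_of_mul_le_mul_right this hd
  have hβ : β = (m - t) * d := by
    rw [hα] at hs
    have h1 : β = m * d - t * d := by rw [← hs, Nat.add_sub_cancel_left]
    rw [h1, Nat.sub_mul]
  have hch : c.IsHomogeneous ((m - t) * d) := by rw [← hβ]; exact hB
  rcases hatom (p ^ j₀) c t (m - t) hpjh hch hc with h | h
  · -- t = 0 ⇒ δ = 0 ⇒ p is a unit, contradiction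
    have hδ0 : δ = 0 := by
      have := Nat.div_mul_cancel (Nat.gcd_dvd_right d δ)
      rw [← htdef] at this
      rw [← this, h, zero_mul]
    exact hp.not_unit (isUnit_of_isHomogeneous_zero (hδ0 ▸ hpδ) hp0)
  · -- m - t = 0 ⇒ c is a unit, but p ∣ c, contradiction
    have hc00 : c.IsHomogeneous 0 := by rw [h, zero_mul] at hch; exact hch
    exact hp.not_unit (isUnit_of_dvd_unit hpc (isUnit_of_isHomogeneous_zero hc00 hc0'))

include hf hf0 in
lemma le_d_of_min_pow (hd : 0 < d) (hfi : Irreducible f) {u v : AwayRing k f}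
    (hu : Irreducible u) (hv : Irreducible v) {j : ℕ}
    (hdvd : u ∣ v ^ j) (hmin : ∀ i < j, ¬ u ∣ v ^ i) : j ≤ d := by
  have hu0 : u ≠ 0 := hu.ne_zero
  have hv0 : v ≠ 0 := hv.ne_zero
  obtain ⟨a, m, ha, hfa, ha0, rfl⟩ := exists_red hf hf0 hd u hu0
  obtain ⟨b, n, hb, hfb, hb0, rfl⟩ := exists_red hf hf0 hd v hv0
  have hj1 : 1 ≤ j := by
    rcases Nat.eq_zero_or_pos j with rfl | h
    · exact absurd (isUnit_of_dvd_one (by simpa using hdvd)) hu.not_isUnit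
    · exact h
  have hfp : Prime f := UniqueFactorizationMonoid.irreducible_iff_prime.mp hfi
  have hfbj : ∀ s : ℕ, ¬ f ∣ b ^ s := fun s hs => hfb (hfp.dvd_of_dvd_pow hs)
  rw [elt_pow hf hb j] at hdvd
  have hab : a ∣ b ^ j := dvd_of_elt_dvd hf hf0 hfi ha _ hfa hdvd
  have hatom := atom_of_irreducible hf hf0 hd hfi ha hfa ha0 hu
  have habd : a ∣ b ^ d := by
    refine UniqueFactorizationMonoid.induction_on_coprime
      (P := fun x => x ∣ a → x ∣ b ^ d) a ?_ ?_ ?_ ?_ (dvd_refl a)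
    · intro h; exact absurd (zero_dvd_iff.mp h) ha0
    · intro x hx _; exact hx.dvd
    · intro p i hp hpa
      rcases Nat.eq_zero_or_pos i with rfl | hi
      · simpa using one_dvd _
      · have hpb : p ∣ b :=
          hp.dvd_of_dvd_pow (((dvd_pow_self p hi.ne').trans hpa).trans hab)
        have hile : i ≤ d := atom_multiplicity_bound hd ha ha0 hatom hp hpa
        exact (pow_dvd_pow_of_dvd hpb i).trans (pow_dvd_pow b hile)
    · intro x y hxy hx hy hxya
      exact hxy.mul_dvd (hx ((dvd_mul_right x y).trans hxya))
        (hy ((dvd_mul_left y x).trans hxya))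
  have hfinal : elt f hf a m ha ∣ (elt f hf b n hb) ^ d := by
    rw [elt_pow hf hb d]
    exact elt_dvd_of_dvd hf hf0 hd ha _ ha0 (pow_ne_zero _ hb0) habd
  by_contra hgt
  push_neg at hgt
  exact hmin d hgt hfinal

include hf hf0 in
lemma exists_min_pow_pair (hd : 0 < d) (hfi : Irreducible f) :
    ∃ u v : AwayRing k f, Irreducible u ∧ Irreducible v ∧ u ∣ v ^ d ∧
      ∀ i < d, ¬ u ∣ v ^ i := by
  have hfp : Prime f := UniqueFactorizationMonoid.irreducible_iff_prime.mp hfi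
  -- generic atom property for elements of degree d
  have hatom1 : ∀ (a : MvPolynomial (Fin 3) k), a.IsHomogeneous (1 * d) → a ≠ 0 →
      ∀ (x y : MvPolynomial (Fin 3) k) (i j : ℕ), x.IsHomogeneous (i * d) →
        y.IsHomogeneous (j * d) → a = x * y → i = 0 ∨ j = 0 := by
    intro a ha h0 x y i j hx hy hxy
    have h1 : a.IsHomogeneous ((i + j) * d) := by
      rw [hxy, add_mul]; exact hx.mul hy
    have h2 : 1 * d = (i + j) * d := ha.inj_right h1 h0
    have h3 : 1 = i + j := Nat.eq_of_mul_eq_mul_right hd h2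
    omega
  have hfdeg : ∀ (z : MvPolynomial (Fin 3) k) (n : ℕ), z.IsHomogeneous n → z ≠ 0 → n < d →
      ¬ f ∣ z := by
    intro z n hz hz0 hn hdvd
    obtain ⟨c, rfl⟩ := hdvd
    have hc0 : c ≠ 0 := by rintro rfl; rw [mul_zero] at hz0; exact hz0 rfl
    obtain ⟨α, β, hs, hfα, -⟩ := exists_isHomogeneous_of_mul hf0 hc0 hz
    have : α = d := hfα.inj_right hf hf0
    omega
  rcases Nat.lt_or_ge d 2 with hd2 | hd2
  · -- d = 1
    have hd1 : d = 1 := by omega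
    -- choose a variable not divisible by f
    have hchoice : ∃ s : Fin 3, ¬ f ∣ X s := by
      by_contra hcon
      push_neg at hcon
      have h0 : Associated f (X 0) := hfi.associated_of_dvd ((prime_X 0).irreducible) (hcon 0)
      have h1 : Associated f (X 1) := hfi.associated_of_dvd ((prime_X 1).irreducible) (hcon 1)
      have h01 : (X 1 : MvPolynomial (Fin 3) k) ∣ X 0 := (h1.symm.trans h0).dvd
      exact X0_not_dvd_X1 h01
    obtain ⟨s, hs⟩ := hchoice
    have hXh : (X s : MvPolynomial (Fin 3) k).IsHomogeneous (1 * d) := by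
      rw [hd1, one_mul]; exact isHomogeneous_X k s
    have hX0 : (X s : MvPolynomial (Fin 3) k) ≠ 0 := X_ne_zero (R := k) s
    set u := elt f hf (X s) 1 hXh with hu_def
    have hu : Irreducible u :=
      irreducible_elt hf hf0 hd hfi hXh hs hX0 one_ne_zero (hatom1 _ hXh hX0)
    refine ⟨u, u, hu, hu, by rw [hd1, pow_one], ?_⟩
    intro i hi
    have : i = 0 := by omega
    subst this
    intro hdd
    exact hu.not_isUnit (isUnit_of_dvd_one (by simpa using hdd))
  · -- d ≥ 2
    have hau : ((X 1 : MvPolynomial (Fin 3) k) ^ d).IsHomogeneous (1 * d) := by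
      rw [one_mul]; exact isHomogeneous_X_pow 1 d
    have hav : ((X 1 : MvPolynomial (Fin 3) k) * X 0 ^ (d - 1)).IsHomogeneous (1 * d) := by
      have h := (isHomogeneous_X k (1 : Fin 3)).mul (isHomogeneous_X_pow (0 : Fin 3) (d - 1))
      rwa [show 1 + (d - 1) = 1 * d by omega] at h
    have hX10 : (X 1 : MvPolynomial (Fin 3) k) ≠ 0 := X_ne_zero (R := k) 1
    have hX00 : (X 0 : MvPolynomial (Fin 3) k) ≠ 0 := X_ne_zero (R := k) 0
    have hau0 : ((X 1 : MvPolynomial (Fin 3) k) ^ d) ≠ 0 := pow_ne_zero _ hX10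
    have hav0 : ((X 1 : MvPolynomial (Fin 3) k) * X 0 ^ (d - 1)) ≠ 0 :=
      mul_ne_zero hX10 (pow_ne_zero _ hX00)
    have hfX1 : ¬ f ∣ (X 1 : MvPolynomial (Fin 3) k) :=
      hfdeg _ 1 (isHomogeneous_X k 1) hX10 (by omega)
    have hfX0 : ¬ f ∣ (X 0 : MvPolynomial (Fin 3) k) :=
      hfdeg _ 1 (isHomogeneous_X k 0) hX00 (by omega)
    have hfau : ¬ f ∣ (X 1 : MvPolynomial (Fin 3) k) ^ d :=
      fun h => hfX1 (hfp.dvd_of_dvd_pow h)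
    have hfav : ¬ f ∣ (X 1 : MvPolynomial (Fin 3) k) * X 0 ^ (d - 1) := by
      intro h
      rcases hfp.2.2 _ _ h with h | h
      · exact hfX1 h
      · exact hfX0 (hfp.dvd_of_dvd_pow h)
    set u := elt f hf ((X 1 : MvPolynomial (Fin 3) k) ^ d) 1 hau with hu_def
    set v := elt f hf ((X 1 : MvPolynomial (Fin 3) k) * X 0 ^ (d - 1)) 1 hav with hv_def
    have hu : Irreducible u :=
      irreducible_elt hf hf0 hd hfi hau hfau hau0 one_ne_zero (hatom1 _ hau hau0)
    have hv : Irreducible v :=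
      irreducible_elt hf hf0 hd hfi hav hfav hav0 one_ne_zero (hatom1 _ hav hav0)
    refine ⟨u, v, hu, hv, ?_, ?_⟩
    · rw [elt_pow hf hav d]
      apply elt_dvd_of_dvd hf hf0 hd hau _ hau0 (pow_ne_zero _ hav0)
      rw [mul_pow]
      exact dvd_mul_right _ _
    · intro i hi hdd
      rw [elt_pow hf hav i] at hdd
      have hfavi : ¬ f ∣ ((X 1 : MvPolynomial (Fin 3) k) * X 0 ^ (d - 1)) ^ i :=
        fun h => hfav (hfp.dvd_of_dvd_pow h)
      have hpoly : (X 1 : MvPolynomial (Fin 3) k) ^ d ∣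
          ((X 1 : MvPolynomial (Fin 3) k) * X 0 ^ (d - 1)) ^ i :=
        dvd_of_elt_dvd hf hf0 hfi hau _ hfau hdd
      rw [mul_pow, ← pow_mul] at hpoly
      obtain ⟨w, hw⟩ := hpoly
      have hX1i : (X 1 : MvPolynomial (Fin 3) k) ^ i ≠ 0 := pow_ne_zero _ hX10
      have h2 : (X 0 : MvPolynomial (Fin 3) k) ^ ((d - 1) * i)
          = X 1 ^ (d - i) * w := by
        apply mul_left_cancel₀ hX1i
        rw [← mul_assoc, ← pow_add, show i + (d - i) = d by omega, hw]
      have h3 : (X 1 : MvPolynomial (Fin 3) k) ∣ X 0 ^ ((d - 1) * i) := by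
        rw [h2]
        exact ((dvd_pow_self (X 1 : MvPolynomial (Fin 3) k) (by omega : d - i ≠ 0)).trans
          (dvd_mul_right _ _))
      exact X0_not_dvd_X1 ((prime_X 1).dvd_of_dvd_pow h3)

end elt

lemma transport_pair {A B : Type} [CommRing A] [CommRing B] (φ : A ≃+* B) {j : ℕ}
    (h : ∃ u v : A, Irreducible u ∧ Irreducible v ∧ u ∣ v ^ j ∧ ∀ i < j, ¬ u ∣ v ^ i) :
    ∃ u v : B, Irreducible u ∧ Irreducible v ∧ u ∣ v ^ j ∧ ∀ i < j, ¬ u ∣ v ^ i := by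
  obtain ⟨u, v, hu, hv, h1, h2⟩ := h
  refine ⟨φ u, φ v, (MulEquiv.irreducible_iff φ).2 hu,
    (MulEquiv.irreducible_iff φ).2 hv, ?_, ?_⟩
  · rw [← map_pow]
    exact map_dvd φ h1
  · intro i hi hdd
    apply h2 i hi
    have h3 := map_dvd φ.symm hdd
    simp only [map_pow, RingEquiv.symm_apply_apply] at h3
    exact h3

end

end Lemma21

/-- Lemma 2.1: irreducible plane curves with isomorphic complements have the same degree. -/
theorem degree_eq_of_complement_iso (k : Type) [Field k] [IsAlgClosed k]
    (f g : MvPolynomial (Fin 3) k) (d e : ℕ) (hd : 0 < d) (he : 0 < e)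
    (hf : f.IsHomogeneous d) (hg : g.IsHomogeneous e)
    (hfirr : Irreducible f) (hgirr : Irreducible g)
    (hiso : Nonempty (AwayRing k f ≃ₐ[k] AwayRing k g)) :
    d = e := by
  obtain ⟨φ⟩ := hiso
  have hf0 : f ≠ 0 := hfirr.ne_zero
  have hg0 : g ≠ 0 := hgirr.ne_zero
  have Pf := Lemma21.exists_min_pow_pair hf hf0 hd hfirr
  have Pg := Lemma21.exists_min_pow_pair hg hg0 he hgirr
  have Pfg := Lemma21.transport_pair φ.toRingEquiv Pf
  have Pgf := Lemma21.transport_pair φ.symm.toRingEquiv Pg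
  obtain ⟨u, v, hu, hv, h1, h2⟩ := Pfg
  have hde : d ≤ e := Lemma21.le_d_of_min_pow hg hg0 he hgirr hu hv h1 h2
  obtain ⟨u', v', hu', hv', h1', h2'⟩ := Pgf
  have hed : e ≤ d := Lemma21.le_d_of_min_pow hf hf0 hd hfirr hu' hv' h1' h2'
  omega
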